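/- Let k : ℝ → ℝ be continuous on [-1,1] and suppose that for every continuously differentiable f : ℝ → ℝ and every x₀ ∈ ℝ, the limit as h → 0⁺ of −(1/h) ∫_{-1}^{1} k(t) f(x₀ + h t) dt equals f'(x₀). Then ∫_{-1}^{1} k(t) dt = 0 and ∫_{-1}^{1} t · k(t) dt = −1. -/

import Mathlib

open Filter Topology intervalIntegral Set

/-- Necessary moment conditions on a first-order kernel: if `k` is continuous on `[-1,1]`
and `−(1/h) ∫_{-1}^{1} k(t) f(x₀+ht) dt → f'(x₀)` as `h → 0⁺` for every continuously
differentiable `f` and every `x₀`, then `∫_{-1}^{1} k = 0` and `∫_{-1}^{1} t·k(t) dt = −1`. -/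
theorem first_order_kernel_moments (k : ℝ → ℝ)
    (hk : ContinuousOn k (Icc (-1 : ℝ) 1))
    (hker : ∀ f : ℝ → ℝ, ContDiff ℝ 1 f → ∀ x₀ : ℝ,
      Tendsto (fun h : ℝ => -(1 / h) * ∫ t in (-1 : ℝ)..1, k t * f (x₀ + h * t))
        (𝓝[>] (0 : ℝ)) (𝓝 (deriv f x₀))) :
    (∫ t in (-1 : ℝ)..1, k t) = 0 ∧ (∫ t in (-1 : ℝ)..1, t * k t) = -1 := by
  set C := ∫ t in (-1 : ℝ)..1, k t with hC
  set M := ∫ t in (-1 : ℝ)..1, t * k t with hM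
  have hid : Tendsto (fun h : ℝ => h) (𝓝[>] (0 : ℝ)) (𝓝 0) :=
    tendsto_id.mono_right nhdsWithin_le_nhds
  -- Step 1: constant function gives C = 0
  have h1 := hker (fun _ => (1 : ℝ)) contDiff_const 0
  simp only [mul_one, deriv_const'] at h1
  have h1' : Tendsto (fun h : ℝ => h * (-(1 / h) * C)) (𝓝[>] (0 : ℝ)) (𝓝 (0 * 0)) :=
    hid.mul h1
  have heq1 : (fun h : ℝ => h * (-(1 / h) * C)) =ᶠ[𝓝[>] (0 : ℝ)] fun _ => -C := by
    filter_upwards [self_mem_nhdsWithin] with h hh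
    have : h ≠ 0 := ne_of_gt hh
    field_simp
  have hC0 : C = 0 := by
    have := tendsto_nhds_unique (h1'.congr' heq1) tendsto_const_nhds
    linarith [this]
  refine ⟨hC0, ?_⟩
  -- Step 2: identity function gives M = -1
  have h2 := hker id contDiff_id 0
  have hderiv : deriv (id : ℝ → ℝ) 0 = 1 := by simp
  rw [hderiv] at h2
  have hint : ∀ h : ℝ, (∫ t in (-1 : ℝ)..1, k t * id (0 + h * t)) = h * M := by
    intro h
    have : (fun t => k t * id (0 + h * t)) = fun t => h * (t * k t) := by
      funext t; simp [id]; ring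
    rw [this, intervalIntegral.integral_const_mul]
  have h2' : Tendsto (fun h : ℝ => -(1 / h) * (h * M)) (𝓝[>] (0 : ℝ)) (𝓝 1) := by
    refine h2.congr fun h => ?_
    rw [hint h]
  have heq2 : (fun h : ℝ => -(1 / h) * (h * M)) =ᶠ[𝓝[>] (0 : ℝ)] fun _ => -M := by
    filter_upwards [self_mem_nhdsWithin] with h hh
    have : h ≠ 0 := ne_of_gt hh
    field_simp
  have := tendsto_nhds_unique (h2'.congr' heq2) tendsto_const_nhds
  linarith [this]
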